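/- Suppose R is a principal ideal domain, a_1 ≠ 0, n > 2, and (a_1,…,a_n) = 1. Let A = (x_{i,j}) ∈ M_{n−1}(R) be any upper triangular matrix with diagonal entries x_{i,i} = (a_1,…,a_i)/(a_1,…,a_{i+1}) for 1 ≤ i < n, whose columns satisfy a_2·x_{1,j} + ⋯ + a_j·x_{j−1,j} + a_{j+1}·(a_1,…,a_j)/(a_1,…,a_{j+1}) ≡ 0 (mod a_1) for 1 ≤ j < n. Let D = diag(a_1/(a_1,a_2),…,a_1/(a_1,a_n)) ∈ M_{n−1}(R). Then det(A) = a_1, the matrix C = A^{−1}·D (computed over the fraction field of R) has all entries in R, and for all 1 ≤ i < j ≤ n−1 one has C_{i,j} ∈ R·C_{i,i} + R·C_{j,j}. -/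

import Mathlib

private lemma span_set_le_mono {R : Type*} [CommRing R] {n : ℕ} (a : Fin n → R)
    {t t' : ℕ} (h : t ≤ t') :
    Ideal.span {x : R | ∃ i : Fin n, (i : ℕ) ≤ t ∧ x = a i} ≤
      Ideal.span {x : R | ∃ i : Fin n, (i : ℕ) ≤ t' ∧ x = a i} :=
  Ideal.span_mono (fun _ ⟨i, hi, hx⟩ => ⟨i, le_trans hi h, hx⟩)

private lemma span_set_one_eq {R : Type*} [CommRing R] {n : ℕ} (a : Fin (n + 2) → R) :
    Ideal.span {x : R | ∃ i : Fin (n + 2), (i : ℕ) ≤ 1 ∧ x = a i} =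
      Ideal.span {a 0, a 1} := by
  apply le_antisymm
  · rw [Ideal.span_le]
    rintro x ⟨i, hi, rfl⟩
    have hiv : i = 0 ∨ i = 1 := by
      rcases Nat.le_one_iff_eq_zero_or_eq_one.mp hi with h | h
      · left; exact Fin.ext (by simpa using h)
      · right; exact Fin.ext (by simpa [Fin.val_one] using h)
    rcases hiv with rfl | rfl
    · exact Ideal.subset_span (by simp)
    · exact Ideal.subset_span (by simp)
  · rw [Ideal.span_le]
    rintro x hx
    rcases hx with rfl | hx
    · exact Ideal.subset_span ⟨0, by simp, rfl⟩
    · rw [Set.mem_singleton_iff] at hx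
      subst hx
      exact Ideal.subset_span ⟨1, by simp [Fin.val_one], rfl⟩

private theorem aux13 {R : Type*} [CommRing R] [IsDomain R] [IsPrincipalIdealRing R] :
    ∀ (N : ℕ), 1 ≤ N → ∀ (a : Fin (N + 1) → R), a 0 ≠ 0 →
    ∀ (g : ℕ → R), g 0 = a 0 →
    (∀ t, Ideal.span {g t} =
      Ideal.span {x | ∃ i : Fin (N + 1), (i : ℕ) ≤ t ∧ x = a i}) →
    g N = 1 →
    ∀ (c : Fin N → R), (∀ k, Ideal.span {c k} = Ideal.span {a 0, a k.succ}) →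
    ∀ (A : Matrix (Fin N) (Fin N) R),
    (∀ i j : Fin N, j < i → A i j = 0) →
    (∀ k : Fin N, A k k * g ((k : ℕ) + 1) = g (k : ℕ)) →
    (∀ k : Fin N, a 0 ∣ ∑ t, a t.succ * A t k) →
    ∀ (d : Fin N → R), (∀ k, d k * c k = a 0) →
    A.det = a 0 ∧
    ∃ C : Matrix (Fin N) (Fin N) R, A * C = Matrix.diagonal d ∧
      (∀ i j : Fin N, j < i → C i j = 0) ∧
      (∀ k : Fin N, C k k * g (k : ℕ) = d k * g ((k : ℕ) + 1)) ∧
      (∀ i j : Fin N, i < j → ∃ u v : R, C i j = u * C i i + v * C j j) := by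
  intro N
  induction N with
  | zero => omega
  | succ N ih =>
    intro _ a ha1 g hg0 hg hglast c hc A hAtri hAdiag hAcol d hd
    -- generic facts
    have hga : ∀ t, g t ∣ a 0 := by
      intro t
      have h1 : a 0 ∈ Ideal.span {x : R | ∃ i : Fin (N + 2), (i : ℕ) ≤ t ∧ x = a i} :=
        Ideal.subset_span ⟨0, by simp, rfl⟩
      rw [← hg t, Ideal.mem_span_singleton] at h1
      exact h1
    have hgne : ∀ t, g t ≠ 0 := by
      intro t h0
      exact ha1 (by simpa [h0] using hga t)
    have hcne : ∀ k, c k ≠ 0 := by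
      intro k h0
      exact ha1 (by rw [← hd k, h0, mul_zero])
    have hca : ∀ k : Fin (N + 1), c k ∣ a k.succ := by
      intro k
      have h1 : a k.succ ∈ Ideal.span {a 0, a k.succ} :=
        Ideal.subset_span (by simp)
      rw [← hc k, Ideal.mem_span_singleton] at h1
      exact h1
    have hgdvd : ∀ t, g (t + 1) ∣ g t := by
      intro t
      have h1 : g t ∈ Ideal.span {g (t + 1)} := by
        rw [hg (t + 1)]
        exact span_set_le_mono a (Nat.le_succ t)
          (by rw [← hg t]; exact Ideal.mem_span_singleton_self _)
      rwa [Ideal.mem_span_singleton] at h1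
    have hq : A 0 0 * g 1 = a 0 := by
      have h1 := hAdiag 0
      simpa [hg0] using h1
    have hg1ne : g 1 ≠ 0 := hgne 1
    have hspan01 : Ideal.span {g 1} = Ideal.span {a 0, a 1} := by
      rw [hg 1, span_set_one_eq]
    have hg1a : g 1 ∣ a 0 := hga 1
    have hg1a1 : g 1 ∣ a 1 := by
      have h1 : a 1 ∈ Ideal.span {a 0, a 1} := Ideal.subset_span (by simp)
      rw [← hspan01, Ideal.mem_span_singleton] at h1
      exact h1
    obtain ⟨s0, t0, hbez⟩ : ∃ s0 t0 : R, s0 * a 0 + t0 * a 1 = g 1 := by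
      have h1 : g 1 ∈ Ideal.span {a 0, a 1} := by
        rw [← hspan01]; exact Ideal.mem_span_singleton_self _
      exact Ideal.mem_span_pair.mp h1
    rcases Nat.eq_zero_or_pos N with hN0 | hN1
    · -- base case : N = 0, size-1 matrices
      subst hN0
      have hg1one : g 1 = 1 := by simpa using hglast
      have hA00 : A 0 0 = a 0 := by rw [← hq, hg1one, mul_one]
      have hc0top : (1 : R) ∈ Ideal.span {c 0} := by
        have h2 := hc 0
        rw [Fin.succ_zero_eq_one] at h2
        rw [h2, ← span_set_one_eq a, ← hg 1, hg1one]
        exact Ideal.mem_span_singleton_self _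
      obtain ⟨w, hw⟩ := Ideal.mem_span_singleton.mp hc0top
      have hone : ∀ x : Fin (0 + 1), x = 0 := fun x => Fin.ext (by omega)
      have hmain : a 0 * w = d 0 := by
        calc a 0 * w = d 0 * (c 0 * w) := by rw [← hd 0]; ring
          _ = d 0 := by rw [← hw]; ring
      constructor
      · rw [Matrix.det_fin_one, hA00]
      · refine ⟨Matrix.of fun _ _ => w, ?_, ?_, ?_, ?_⟩
        · ext i j
          rw [hone i, hone j]
          rw [Matrix.mul_apply, Fin.sum_univ_one]
          simpa [hA00] using hmain
        · intro i j hji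
          rw [hone i, hone j] at hji
          exact absurd hji (lt_irrefl 0)
        · intro k
          rw [hone k]
          simp only [Matrix.of_apply, Fin.val_zero, hg0, Nat.zero_add]
          rw [hglast, mul_one]
          calc w * a 0 = a 0 * w := by ring
            _ = d 0 := hmain
        · intro i j hij
          rw [hone i, hone j] at hij
          exact absurd hij (lt_irrefl 0)
    · -- inductive step : N ≥ 1
      set a' : Fin (N + 1) → R := fun i => Fin.cases (g 1) (fun i' => a i'.succ.succ) i
        with ha'def
      have ha'0 : a' 0 = g 1 := by simp [ha'def]
      have ha's : ∀ i : Fin N, a' i.succ = a i.succ.succ := fun i => by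
        simp [ha'def]
      have hg' : ∀ t, Ideal.span {g (t + 1)} =
          Ideal.span {x : R | ∃ i : Fin (N + 1), (i : ℕ) ≤ t ∧ x = a' i} := by
        intro t
        rw [hg (t + 1)]
        apply le_antisymm
        · rw [Ideal.span_le]
          rintro x ⟨i, hi, rfl⟩
          have hsub : Ideal.span {g 1} ≤
              Ideal.span {x : R | ∃ i : Fin (N + 1), (i : ℕ) ≤ t ∧ x = a' i} := by
            rw [Ideal.span_singleton_le_iff_mem]
            exact Ideal.subset_span ⟨0, by simp, ha'0.symm⟩
          induction i using Fin.cases with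
          | zero =>
            exact hsub (Ideal.mem_span_singleton.mpr hg1a)
          | succ i1 =>
            induction i1 using Fin.cases with
            | zero =>
              refine hsub (Ideal.mem_span_singleton.mpr ?_)
              simpa using hg1a1
            | succ i2 =>
              refine Ideal.subset_span ⟨i2.succ, ?_, (ha's i2).symm⟩
              have h6 : (i2 : ℕ) + 2 ≤ t + 1 := by simpa [Fin.val_succ] using hi
              simp only [Fin.val_succ]
              omega
        · rw [Ideal.span_le]
          rintro x ⟨i, hi, rfl⟩
          induction i using Fin.cases with
          | zero =>
            rw [ha'0]
            have h1 : g 1 ∈ Ideal.span {g 1} := Ideal.mem_span_singleton_self _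
            rw [hg 1] at h1
            exact span_set_le_mono a (by omega) h1
          | succ i1 =>
            rw [ha's i1]
            refine Ideal.subset_span ⟨i1.succ.succ, ?_, rfl⟩
            have h6 : (i1 : ℕ) + 1 ≤ t := by simpa [Fin.val_succ] using hi
            simp only [Fin.val_succ]
            omega
      have hc'ex : ∀ k : Fin N, ∃ ck : R,
          Ideal.span {ck} = Ideal.span {a' 0, a' k.succ} := fun k =>
        ⟨Submodule.IsPrincipal.generator _, Ideal.span_singleton_generator _⟩
      choose c' hc' using hc'ex
      have hc'g1 : ∀ k, c' k ∣ g 1 := by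
        intro k
        have h1 : g 1 ∈ Ideal.span {c' k} := by
          rw [hc' k, ← ha'0]
          exact Ideal.subset_span (by simp)
        rwa [Ideal.mem_span_singleton] at h1
      have hd'ex : ∀ k : Fin N, ∃ dk : R, dk * c' k = g 1 := by
        intro k
        obtain ⟨dk, hdk⟩ := hc'g1 k
        exact ⟨dk, by rw [hdk]; ring⟩
      choose d' hd' using hd'ex
      have hc'ne : ∀ k, c' k ≠ 0 := by
        intro k h0
        exact hg1ne (by rw [← hd' k, h0, mul_zero])
      have hc'a : ∀ k : Fin N, c' k ∣ a k.succ.succ := by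
        intro k
        have h1 : a k.succ.succ ∈ Ideal.span {c' k} := by
          rw [hc' k, ← ha's k]
          exact Ideal.subset_span (by simp)
        rwa [Ideal.mem_span_singleton] at h1
      have hc'a0 : ∀ k : Fin N, c' k ∣ a 0 := fun k => dvd_trans (hc'g1 k) hg1a
      set A' : Matrix (Fin N) (Fin N) R := Matrix.of fun i j => A i.succ j.succ
        with hA'def
      have hA'tri : ∀ i j : Fin N, j < i → A' i j = 0 := by
        intro i j hji
        exact hAtri _ _ (by simpa [Fin.succ_lt_succ_iff] using hji)
      have hA'diag : ∀ k : Fin N, A' k k * g ((k : ℕ) + 1 + 1) = g ((k : ℕ) + 1) := by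
        intro k
        have h1 := hAdiag k.succ
        simpa [Fin.val_succ, hA'def] using h1
      have hA'col : ∀ k : Fin N, g 1 ∣ ∑ t, a' t.succ * A' t k := by
        intro k
        have h1 := hAcol k.succ
        rw [Fin.sum_univ_succ, Fin.succ_zero_eq_one] at h1
        have h2 : g 1 ∣ a 1 * A 0 k.succ +
            ∑ t : Fin N, a t.succ.succ * A t.succ k.succ :=
          dvd_trans hg1a h1
        have h3 : g 1 ∣ a 1 * A 0 k.succ := Dvd.dvd.mul_right hg1a1 _
        have h4 := (dvd_add_right h3).mp h2
        have h5 : ∑ t : Fin N, a' t.succ * A' t k =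
            ∑ t : Fin N, a t.succ.succ * A t.succ k.succ := by
          apply Finset.sum_congr rfl
          intro t _
          rw [ha's t, hA'def]
          rfl
        rwa [h5]
      -- apply induction hypothesis
      obtain ⟨hdet', C', hAC', hC'tri, hC'diag, hC'mem⟩ :=
        ih hN1 a' (ha'0 ▸ hg1ne) (fun t => g (t + 1)) ha'0.symm hg' hglast c' hc'
          A' hA'tri hA'diag hA'col d' hd'
      -- rho construction
      have hkey : ∀ j : Fin N, ∃ s t : R, s * g 1 + t * c j.succ = c' j := by
        intro j
        have h1 : c' j ∈ Ideal.span {g 1, c j.succ} := by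
          have h2 : c' j ∈ Ideal.span {a' 0, a' j.succ} := by
            rw [← hc' j]; exact Ideal.mem_span_singleton_self _
          refine Ideal.span_le.mpr ?_ h2
          rintro x hx
          rcases hx with rfl | hx
          · rw [ha'0]; exact Ideal.subset_span (by simp)
          · rw [Set.mem_singleton_iff] at hx
            subst hx
            rw [ha's j]
            obtain ⟨y, hy⟩ := hca j.succ
            exact Ideal.mem_span_pair.mpr ⟨0, y, by rw [hy]; ring⟩
        exact Ideal.mem_span_pair.mp h1
      choose s t hst using hkey
      set ρ : Fin N → R := fun j => s j * d j.succ + t j * A 0 0 with hρdef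
      have hρg1 : ∀ j : Fin N, ρ j * g 1 = d j.succ * c' j := by
        intro j
        have h1 := hst j
        have h2 := hd j.succ
        calc ρ j * g 1 = (s j * d j.succ + t j * A 0 0) * g 1 := rfl
          _ = s j * g 1 * d j.succ + t j * (A 0 0 * g 1) := by ring
          _ = s j * g 1 * d j.succ + t j * (d j.succ * c j.succ) := by rw [hq, ← h2]
          _ = d j.succ * (s j * g 1 + t j * c j.succ) := by ring
          _ = d j.succ * c' j := by rw [h1]
      have hρd' : ∀ j : Fin N, ρ j * d' j = d j.succ := by
        intro j
        apply mul_right_cancel₀ (hc'ne j)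
        calc ρ j * d' j * c' j = ρ j * (d' j * c' j) := by ring
          _ = ρ j * g 1 := by rw [hd' j]
          _ = d j.succ * c' j := hρg1 j
      -- z: A 0 0 = rho i * z i
      have hzex : ∀ i : Fin N, ∃ zi : R, A 0 0 = ρ i * zi := by
        intro i
        have h1 : c' i ∣ c i.succ := by
          have h2 : c i.succ ∈ Ideal.span {c' i} := by
            rw [hc' i]
            have h3 : c i.succ ∈ Ideal.span {a 0, a i.succ.succ} := by
              rw [← hc i.succ]; exact Ideal.mem_span_singleton_self _
            refine Ideal.span_le.mpr ?_ h3
            rintro x hx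
            rcases hx with rfl | hx
            · obtain ⟨y, hy⟩ := hg1a
              exact Ideal.mem_span_pair.mpr ⟨y, 0, by rw [ha'0, hy]; ring⟩
            · rw [Set.mem_singleton_iff] at hx
              subst hx
              exact Ideal.mem_span_pair.mpr ⟨0, 1, by rw [ha's i]; ring⟩
          rwa [Ideal.mem_span_singleton] at h2
        obtain ⟨z0, hz0⟩ := h1
        refine ⟨z0, ?_⟩
        apply mul_left_cancel₀ hg1ne
        apply mul_right_cancel₀ (hc'ne i)
        calc g 1 * A 0 0 * c' i = (A 0 0 * g 1) * c' i := by ring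
          _ = a 0 * c' i := by rw [hq]
          _ = (d i.succ * c i.succ) * c' i := by rw [hd i.succ]
          _ = (d i.succ * c' i) * c i.succ := by ring
          _ = (ρ i * g 1) * c i.succ := by rw [← hρg1 i]
          _ = (ρ i * g 1) * (c' i * z0) := by rw [hz0]
          _ = g 1 * (ρ i * z0) * c' i := by ring
      choose z hz using hzex
      -- m: g (j+1) = m j * g (j+2)
      have hmex : ∀ j : Fin N, ∃ mj : R, g ((j : ℕ) + 1) = mj * g ((j : ℕ) + 2) := by
        intro j
        obtain ⟨mj, hmj⟩ := hgdvd ((j : ℕ) + 1)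
        exact ⟨mj, by rw [hmj]; ring⟩
      choose m hm using hmex
      -- d j.succ = m j * (ρ j * C' j j)
      have hdm : ∀ j : Fin N, d j.succ = m j * (ρ j * C' j j) := by
        intro j
        apply mul_right_cancel₀ (hgne ((j : ℕ) + 1))
        calc d j.succ * g ((j : ℕ) + 1) = d j.succ * (m j * g ((j : ℕ) + 2)) := by
              rw [← hm j]
          _ = m j * (ρ j * (d' j * g ((j : ℕ) + 1 + 1))) := by
              rw [← hρd' j]; ring_nf
          _ = m j * (ρ j * (C' j j * g ((j : ℕ) + 1))) := by rw [← hC'diag j]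
          _ = m j * (ρ j * C' j j) * g ((j : ℕ) + 1) := by ring
      -- H from column divisibility
      have hHex : ∀ k : Fin (N + 1), ∃ Hk : R, ∑ t, a t.succ * A t k = a 0 * Hk :=
        fun k => hAcol k
      choose H hH using hHex
      have hyex : ∀ j : Fin N, ∃ yj : R, a j.succ.succ = yj * c j.succ := by
        intro j
        obtain ⟨y, hy⟩ := hca j.succ
        exact ⟨y, by rw [hy]; ring⟩
      choose y hy using hyex
      -- construction of row 0 entries
      have hFex : ∀ j : Fin N, ∃ Fj : R,
          A 0 0 * Fj = -∑ k : Fin N, A 0 k.succ * (ρ j * C' k j) := by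
        intro j
        set Sj := ∑ k : Fin N, A 0 k.succ * (ρ j * C' k j) with hSjdef
        set Wj := ∑ k : Fin N, H k.succ * (ρ j * C' k j) with hWjdef
        have hstep1 : a 0 * Wj = a 1 * Sj + a j.succ.succ * d j.succ := by
          have e1 : a 0 * Wj =
              ∑ k : Fin N, (∑ u : Fin (N + 1), a u.succ * A u k.succ) * (ρ j * C' k j) := by
            rw [hWjdef, Finset.mul_sum]
            apply Finset.sum_congr rfl
            intro k _
            rw [hH k.succ]; ring
          have e2 : ∀ k : Fin N, (∑ u : Fin (N + 1), a u.succ * A u k.succ) =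
              a 1 * A 0 k.succ + ∑ u : Fin N, a u.succ.succ * A u.succ k.succ := by
            intro k
            rw [Fin.sum_univ_succ, Fin.succ_zero_eq_one]
          have e3 : a 0 * Wj = a 1 * Sj +
              ∑ k : Fin N, ∑ u : Fin N,
                a u.succ.succ * A u.succ k.succ * (ρ j * C' k j) := by
            rw [e1]
            rw [Finset.sum_congr rfl (fun k _ => by rw [e2 k, add_mul])]
            rw [Finset.sum_add_distrib]
            congr 1
            · rw [hSjdef, Finset.mul_sum]
              exact Finset.sum_congr rfl (fun k _ => by ring)
            · exact Finset.sum_congr rfl (fun k _ => by rw [Finset.sum_mul])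
          have e4 : ∑ k : Fin N, ∑ u : Fin N,
              a u.succ.succ * A u.succ k.succ * (ρ j * C' k j) =
              ρ j * ∑ u : Fin N, a u.succ.succ * ((A' * C') u j) := by
            rw [Finset.sum_comm, Finset.mul_sum]
            apply Finset.sum_congr rfl
            intro u _
            rw [Matrix.mul_apply, Finset.mul_sum, Finset.mul_sum]
            apply Finset.sum_congr rfl
            intro k _
            rw [hA'def]
            simp only [Matrix.of_apply]
            ring
          have e5 : ∑ u : Fin N, a u.succ.succ * ((A' * C') u j) =
              a j.succ.succ * d' j := by
            rw [hAC']
            have e5' : ∀ u : Fin N, u ≠ j →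
                a u.succ.succ * Matrix.diagonal d' u j = 0 := fun u hu => by
              rw [Matrix.diagonal_apply_ne _ hu, mul_zero]
            rw [Fintype.sum_eq_single j e5', Matrix.diagonal_apply_eq]
          rw [e3, e4, e5, ← hρd' j]
          ring
        have hb : g 1 * Sj = a 0 * (s0 * Sj + t0 * Wj - t0 * y j) := by
          have h2 := hd j.succ
          have h3 := hy j
          calc g 1 * Sj = (s0 * a 0 + t0 * a 1) * Sj := by rw [hbez]
            _ = s0 * a 0 * Sj + t0 * (a 1 * Sj) := by ring
            _ = s0 * a 0 * Sj + t0 * (a 0 * Wj - a j.succ.succ * d j.succ) := by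
                rw [hstep1]; ring
            _ = s0 * a 0 * Sj + t0 * (a 0 * Wj - y j * (c j.succ * d j.succ)) := by
                rw [h3]; ring
            _ = s0 * a 0 * Sj + t0 * (a 0 * Wj - y j * a 0) := by
                rw [mul_comm (c j.succ) (d j.succ), h2]
            _ = a 0 * (s0 * Sj + t0 * Wj - t0 * y j) := by ring
        have hcan : g 1 * Sj = g 1 * (A 0 0 * (s0 * Sj + t0 * Wj - t0 * y j)) := by
          rw [hb, ← hq]; ring
        have hS : Sj = A 0 0 * (s0 * Sj + t0 * Wj - t0 * y j) :=
          mul_left_cancel₀ hg1ne hcan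
        exact ⟨-(s0 * Sj + t0 * Wj - t0 * y j), by rw [mul_neg, ← hS]⟩
      choose F hF using hFex
      -- C 0 0 entry
      have hc0' : Ideal.span {c 0} = Ideal.span {a 0, a 1} := by
        have h2 := hc 0
        rwa [Fin.succ_zero_eq_one] at h2
      obtain ⟨e1, he1⟩ : ∃ e1 : R, g 1 = c 0 * e1 := by
        have h1 : g 1 ∈ Ideal.span {c 0} := by
          rw [hc0', ← hspan01]
          exact Ideal.mem_span_singleton_self _
        exact Ideal.mem_span_singleton.mp h1
      obtain ⟨f1, hf1⟩ : ∃ f1 : R, c 0 = g 1 * f1 := by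
        have h1 : c 0 ∈ Ideal.span {g 1} := by
          rw [hspan01, ← hc0']
          exact Ideal.mem_span_singleton_self _
        exact Ideal.mem_span_singleton.mp h1
      have hc0ne : c 0 ≠ 0 := hcne 0
      have he1unit : f1 * e1 = 1 := by
        apply mul_left_cancel₀ hg1ne
        calc g 1 * (f1 * e1) = (g 1 * f1) * e1 := by ring
          _ = c 0 * e1 := by rw [← hf1]
          _ = g 1 := by rw [← he1]
          _ = g 1 * 1 := by ring
      have hA00e1 : A 0 0 * e1 = d 0 := by
        apply mul_right_cancel₀ hc0ne
        calc A 0 0 * e1 * c 0 = A 0 0 * (c 0 * e1) := by ring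
          _ = A 0 0 * g 1 := by rw [← he1]
          _ = a 0 := hq
          _ = d 0 * c 0 := (hd 0).symm
      -- the matrix C
      set C : Matrix (Fin (N + 1)) (Fin (N + 1)) R := Matrix.of fun i j =>
        Fin.cases (Fin.cases e1 F j) (fun i' => Fin.cases 0 (fun j' => ρ j' * C' i' j') j) i
        with hCdef
      have hC00 : C 0 0 = e1 := by simp [hCdef]
      have hC0s : ∀ j : Fin N, C 0 j.succ = F j := by intro j; simp [hCdef]
      have hCs0 : ∀ i : Fin N, C i.succ 0 = 0 := by intro i; simp [hCdef]
      have hCss : ∀ i j : Fin N, C i.succ j.succ = ρ j * C' i j := by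
        intro i j; simp [hCdef]
      refine ⟨?_, C, ?_, ?_, ?_, ?_⟩
      · -- determinant
        have htr : A.BlockTriangular id := fun i j h => hAtri i j h
        have htr' : A'.BlockTriangular id := fun i j h => hA'tri i j h
        rw [Matrix.det_of_upperTriangular htr, Fin.prod_univ_succ]
        have h1 : ∏ i : Fin N, A i.succ i.succ = A'.det := by
          rw [Matrix.det_of_upperTriangular htr']
          rfl
        rw [h1, hdet', ha'0, hq]
      · -- A * C = diagonal d
        ext i j
        rw [Matrix.mul_apply, Fin.sum_univ_succ]
        induction i using Fin.cases with
        | zero =>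
          induction j using Fin.cases with
          | zero =>
            rw [hC00]
            rw [Finset.sum_congr rfl (fun k _ => by rw [hCs0 k, mul_zero])]
            simp [hA00e1]
          | succ j' =>
            rw [hC0s j']
            rw [Finset.sum_congr rfl (fun k _ => by rw [hCss k j'])]
            rw [hF j']
            rw [Matrix.diagonal_apply_ne _ (Fin.succ_ne_zero j').symm]
            ring
        | succ i' =>
          induction j using Fin.cases with
          | zero =>
            rw [hC00, hAtri i'.succ 0 (Fin.succ_pos i')]
            rw [Finset.sum_congr rfl (fun k _ => by rw [hCs0 k, mul_zero])]
            rw [Matrix.diagonal_apply_ne _ (Fin.succ_ne_zero i')]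
            simp
          | succ j' =>
            rw [hC0s j', hAtri i'.succ 0 (Fin.succ_pos i'), zero_mul, zero_add]
            have h2 : ∑ k : Fin N, A i'.succ k.succ * C k.succ j'.succ =
                ρ j' * ((A' * C') i' j') := by
              rw [Matrix.mul_apply, Finset.mul_sum]
              apply Finset.sum_congr rfl
              intro k _
              rw [hCss k j', hA'def]
              simp only [Matrix.of_apply]
              ring
            rw [h2, hAC']
            rcases eq_or_ne i' j' with rfl | hne
            · rw [Matrix.diagonal_apply_eq, Matrix.diagonal_apply_eq, hρd' i']
            · rw [Matrix.diagonal_apply_ne _ hne,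
                Matrix.diagonal_apply_ne _ (fun hcon => hne (Fin.succ_injective _ hcon))]
              ring
      · -- triangularity
        intro i j hji
        induction i using Fin.cases with
        | zero => exact absurd hji (Fin.not_lt_zero j)
        | succ i' =>
          induction j using Fin.cases with
          | zero => exact hCs0 i'
          | succ j' =>
            rw [hCss i' j', hC'tri i' j' (by rwa [Fin.succ_lt_succ_iff] at hji),
              mul_zero]
      · -- diagonal identity
        intro k
        induction k using Fin.cases with
        | zero =>
          rw [hC00]
          simp only [Fin.val_zero, hg0, Nat.zero_add]
          calc e1 * a 0 = e1 * (A 0 0 * g 1) := by rw [hq]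
            _ = (A 0 0 * e1) * g 1 := by ring
            _ = d 0 * g 1 := by rw [hA00e1]
        | succ k' =>
          rw [hCss k' k']
          simp only [Fin.val_succ]
          calc ρ k' * C' k' k' * g ((k' : ℕ) + 1) =
              ρ k' * (C' k' k' * g ((k' : ℕ) + 1)) := by ring
            _ = ρ k' * (d' k' * g ((k' : ℕ) + 1 + 1)) := by rw [hC'diag k']
            _ = (ρ k' * d' k') * g ((k' : ℕ) + 1 + 1) := by ring
            _ = d k'.succ * g ((k' : ℕ) + 1 + 1) := by rw [hρd' k']
      · -- membership
        intro i j hij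
        induction j using Fin.cases with
        | zero => exact absurd hij (Fin.not_lt_zero i)
        | succ j' =>
          induction i using Fin.cases with
          | zero =>
            refine ⟨F j' * f1, 0, ?_⟩
            rw [hC00, hC0s j']
            calc F j' = F j' * (f1 * e1) := by rw [he1unit]; ring
              _ = F j' * f1 * e1 + 0 * C j'.succ j'.succ := by ring
          | succ i' =>
            have hij' : i' < j' := by rwa [Fin.succ_lt_succ_iff] at hij
            obtain ⟨u, v, huv⟩ := hC'mem i' j' hij'
            refine ⟨u * t j' * z i', u * s j' * m j' * C' i' i' + v, ?_⟩
            rw [hCss i' j', hCss i' i', hCss j' j', huv]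
            have hzz := hz i'
            have hdd := hdm j'
            calc ρ j' * (u * C' i' i' + v * C' j' j')
                = u * (s j' * d j'.succ + t j' * A 0 0) * C' i' i' +
                  v * (ρ j' * C' j' j') := by rw [hρdef]; ring
              _ = u * s j' * (m j' * (ρ j' * C' j' j')) * C' i' i' +
                  u * t j' * (ρ i' * z i') * C' i' i' +
                  v * (ρ j' * C' j' j') := by rw [← hdd, ← hzz]; ring
              _ = u * t j' * z i' * (ρ i' * C' i' i') +
                  (u * s j' * m j' * C' i' i' + v) * (ρ j' * C' j' j') := by ring

theorem stmt_13 {R : Type*} [CommRing R] [IsDomain R] [IsPrincipalIdealRing R]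
    {N : ℕ} (hN : 2 ≤ N) (a : Fin (N + 1) → R) (ha1 : a 0 ≠ 0)
    (g : ℕ → R) (hg0 : g 0 = a 0)
    (hg : ∀ t, Ideal.span {g t} =
      Ideal.span {x | ∃ i : Fin (N + 1), (i : ℕ) ≤ t ∧ x = a i})
    (hglast : g N = 1)
    (c : Fin N → R)
    (hc : ∀ k, Ideal.span {c k} = Ideal.span {a 0, a k.succ})
    (A : Matrix (Fin N) (Fin N) R)
    (hAtri : ∀ i j : Fin N, j < i → A i j = 0)
    (hAdiag : ∀ k : Fin N, A k k * g ((k : ℕ) + 1) = g (k : ℕ))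
    (hAcol : ∀ k : Fin N, a 0 ∣ ∑ t, a t.succ * A t k)
    (d : Fin N → R) (hd : ∀ k, d k * c k = a 0)
    (Dm : Matrix (Fin N) (Fin N) R) (hDm : Dm = Matrix.diagonal d) :
    A.det = a 0 ∧
    ∃ C : Matrix (Fin N) (Fin N) R, A * C = Dm ∧
      ∀ i j : Fin N, i < j → ∃ u v : R, C i j = u * C i i + v * C j j := by
  obtain ⟨hdet, C, hmul, _, _, hmem⟩ :=
    aux13 N (by omega) a ha1 g hg0 hg hglast c hc A hAtri hAdiag hAcol d hd
  exact ⟨hdet, C, by rw [hDm]; exact hmul, hmem⟩
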